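/- The map sending a bounded affine permutation f to the collection I_a = {f(b) mod n : b < a and f(b) ≥ a} for a ∈ [n] is a bijection from the set of (k,n) bounded affine permutations to the set of (k,n) Grassmann necklaces. -/

import Mathlib

/-- A `(k,n)` Grassmann necklace, modelled with `ZMod n`. -/
def IsGrassmannNecklace (n k : ℕ) (I : ZMod n → Finset (ZMod n)) : Prop :=
  (∀ a, (I a).card = k) ∧ ∀ a, I a ⊆ insert a (I (a + 1))

/-- A `(k,n)` affine permutation. -/
def IsAffinePermutation (n k : ℕ) (f : ℤ → ℤ) : Prop :=
  Function.Bijective f ∧ (∀ i : ℤ, f (i + n) = f i + n) ∧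
    (∑ i ∈ Finset.Icc (1 : ℤ) (n : ℤ), (f i - i)) = (k : ℤ) * n

/-- A `(k,n)` bounded affine permutation. -/
def IsBoundedAffinePermutation (n k : ℕ) (f : ℤ → ℤ) : Prop :=
  IsAffinePermutation n k f ∧ ∀ i : ℤ, i ≤ f i ∧ f i ≤ i + n

/-- The Grassmann necklace associated to a bounded affine permutation:
`I_a = {f b mod n : b < a and f b ≥ a}` (for a representative `a` of the residue
class; by boundedness only `b ∈ [a-n, a)` can contribute). -/
noncomputable def necklaceOfPerm (n : ℕ) (f : ℤ → ℤ) : ZMod n → Finset (ZMod n) := fun a =>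
  (((Finset.Ico ((a.val : ℤ) - n) (a.val : ℤ)).filter
    (fun b => (a.val : ℤ) ≤ f b)).image (fun b => ((f b : ℤ) : ZMod n)))


set_option linter.unusedSectionVars false
set_option maxHeartbeats 1000000

section Val1
variable (n : ℕ) [NeZero n]

/-- The representative of `z : ZMod n` in `[1, n]`. -/
def val1 (z : ZMod n) : ℕ := if z = 0 then n else z.val

variable {n}

lemma val1_pos (z : ZMod n) : 1 ≤ val1 n z := by
  unfold val1; split
  · exact Nat.one_le_iff_ne_zero.2 (NeZero.ne n)
  · exact Nat.one_le_iff_ne_zero.2 (by simpa [ZMod.val_eq_zero] using ‹_›)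

lemma val1_le (z : ZMod n) : val1 n z ≤ n := by
  unfold val1; split
  · exact le_rfl
  · exact (ZMod.val_lt z).le

lemma natCast_val1 (z : ZMod n) : ((val1 n z : ℕ) : ZMod n) = z := by
  unfold val1; split
  · simp [ZMod.natCast_self, *]
  · exact ZMod.natCast_zmod_val z

lemma val1_natCast {t : ℕ} (h1 : 1 ≤ t) (h2 : t ≤ n) : val1 n (t : ZMod n) = t := by
  unfold val1; split
  · rename_i h
    have hd := (ZMod.natCast_eq_zero_iff t n).1 h
    have := Nat.le_of_dvd (by omega) hd
    omega
  · rename_i h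
    rcases lt_or_eq_of_le h2 with h' | h'
    · exact ZMod.val_cast_of_lt h'
    · subst h'; simp [ZMod.natCast_self] at h

lemma val1_injective : Function.Injective (val1 (n := n)) := by
  intro a b h
  have := natCast_val1 a
  rw [h, natCast_val1] at this
  exact this.symm

lemma val1_zero : val1 n (0 : ZMod n) = n := by simp [val1]

lemma val1_lt_of_ne {z : ZMod n} (h : z ≠ 0) : val1 n z < n := by
  unfold val1; rw [if_neg h]; exact ZMod.val_lt z

lemma val1_add_one {z : ZMod n} (h : z ≠ 0) : val1 n (z + 1) = val1 n z + 1 := by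
  have h1 : 1 ≤ val1 n z + 1 := le_add_self
  have h2 : val1 n z + 1 ≤ n := val1_lt_of_ne h
  have : ((val1 n z + 1 : ℕ) : ZMod n) = z + 1 := by push_cast [natCast_val1]; ring
  rw [← this, val1_natCast h1 h2]

lemma natCast_eq_zero_iff' {m : ℕ} (hm : m ≤ n) : ((m : ℕ) : ZMod n) = 0 ↔ m = 0 ∨ m = n := by
  rw [ZMod.natCast_eq_zero_iff]
  constructor
  · intro h
    rcases Nat.eq_zero_or_pos m with h0 | h0
    · exact Or.inl h0
    · exact Or.inr (le_antisymm hm (Nat.le_of_dvd h0 h))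
  · rintro (rfl | rfl) <;> simp

lemma val1_natCast_of_ne_zero {m : ℕ} (hm : m ≤ n) (h : ((m : ℕ) : ZMod n) ≠ 0) :
    val1 n ((m : ℕ) : ZMod n) = m := by
  have := (natCast_eq_zero_iff' hm).not.1 h
  have h1 : 1 ≤ m := by omega
  exact val1_natCast h1 hm

end Val1

section Count
variable {n : ℕ} [NeZero n]

/-- The set of `a` with `val1 (a - b) ≤ d b`, i.e. the cyclic interval `(b, b + d b]`. -/
def Bset (d : ZMod n → ℕ) (a : ZMod n) : Finset (ZMod n) :=
  Finset.univ.filter (fun b => val1 n (a - b) ≤ d b)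

lemma count_aux (d : ZMod n → ℕ) (hd : ∀ b, d b ≤ n) (b : ZMod n) :
    (Finset.univ.filter (fun a : ZMod n => val1 n (a - b) ≤ d b)).card = d b := by
  have : (Finset.univ.filter (fun a : ZMod n => val1 n (a - b) ≤ d b)).card
      = (Finset.Icc 1 (d b)).card := by
    apply Finset.card_bij' (fun a _ => val1 n (a - b)) (fun t _ => b + (t : ZMod n))
    · intro a ha
      rw [Finset.mem_filter] at ha
      rw [Finset.mem_Icc]
      exact ⟨val1_pos _, ha.2⟩
    · intro t ht
      rw [Finset.mem_Icc] at ht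
      rw [Finset.mem_filter]
      refine ⟨Finset.mem_univ _, ?_⟩
      rw [add_sub_cancel_left, val1_natCast ht.1 (ht.2.trans (hd b))]
      exact ht.2
    · intro a ha
      rw [natCast_val1, add_sub_cancel]
    · intro t ht
      rw [Finset.mem_Icc] at ht
      rw [add_sub_cancel_left, val1_natCast ht.1 (ht.2.trans (hd b))]
  rw [this, Nat.card_Icc]; omega

lemma step_iff (d : ZMod n → ℕ) (hd : ∀ b, d b ≤ n) {a b : ZMod n}
    (hba : b ≠ a) (hgb : b + ((d b : ℕ) : ZMod n) ≠ a) :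
    (val1 n (a + 1 - b) ≤ d b ↔ val1 n (a - b) ≤ d b) := by
  have hz : a - b ≠ 0 := sub_ne_zero.2 (Ne.symm hba)
  have hab1 : a + 1 - b = (a - b) + 1 := by ring
  rw [hab1, val1_add_one hz]
  constructor
  · omega
  · intro h
    rcases lt_or_eq_of_le h with h' | h'
    · omega
    · exfalso
      apply hgb
      have : ((d b : ℕ) : ZMod n) = a - b := by
        rw [← h', natCast_val1]
      rw [this]; ring
  
lemma val1_one : val1 n (1 : ZMod n) = 1 := by
  have := val1_natCast (n := n) (t := 1) le_rfl (Nat.one_le_iff_ne_zero.2 (NeZero.ne n))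
  simpa using this

lemma count_step (d : ZMod n → ℕ) (hd : ∀ b, d b ≤ n)
    (hg : Function.Injective (fun b : ZMod n => b + ((d b : ℕ) : ZMod n))) (a : ZMod n) :
    (Bset d (a + 1)).card = (Bset d a).card := by
  by_cases ha : a + ((d a : ℕ) : ZMod n) = a
  · have hda : d a = 0 ∨ d a = n := by
      have h0 : ((d a : ℕ) : ZMod n) = 0 := by
        have := ha; rwa [add_eq_left] at this
      exact (natCast_eq_zero_iff' (hd a)).1 h0
    have : Bset d (a + 1) = Bset d a := by
      ext b
      simp only [Bset, Finset.mem_filter, Finset.mem_univ, true_and]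
      by_cases hb : b = a
      · subst hb
        rw [add_sub_cancel_left, sub_self, val1_one, val1_zero]
        have := NeZero.one_le (n := n)
        omega
      · have hgb : b + ((d b : ℕ) : ZMod n) ≠ a := by
          intro h
          exact hb (hg (h.trans ha.symm))
        exact step_iff d hd hb hgb
    rw [this]
  · have hbij := Finite.injective_iff_bijective.mp hg
    obtain ⟨c, hc⟩ := hbij.2 a
    simp only at hc
    have hca : c ≠ a := by rintro rfl; exact ha hc
    have hdc0 : ((d c : ℕ) : ZMod n) = a - c := by rw [← hc]; ring
    have hdc : ((d c : ℕ) : ZMod n) ≠ 0 := by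
      rw [hdc0]; exact sub_ne_zero.2 (Ne.symm hca)
    have hdc1 : 1 ≤ d c := by
      have h := (natCast_eq_zero_iff' (hd c)).not.1 hdc
      omega
    have hval1c : val1 n (a - c) = d c := by
      rw [← hdc0, val1_natCast hdc1 (hd c)]
    have hda1 : 1 ≤ d a ∧ d a ≤ n - 1 := by
      have h0 : ((d a : ℕ) : ZMod n) ≠ 0 := by
        intro h; apply ha; rw [h, add_zero]
      have h := (natCast_eq_zero_iff' (hd a)).not.1 h0
      have := hd a
      have := NeZero.one_le (n := n)
      omega
    have hsets : Bset d (a + 1) = insert a ((Bset d a).erase c) := by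
      ext b
      simp only [Bset, Finset.mem_filter, Finset.mem_univ, true_and, Finset.mem_insert,
        Finset.mem_erase]
      by_cases hb : b = a
      · subst hb
        simp only [true_or, iff_true, add_sub_cancel_left, val1_one]
        exact hda1.1
      · by_cases hbc : b = c
        · subst hbc
          have hz : a - b ≠ 0 := sub_ne_zero.2 (Ne.symm hb)
          have : a + 1 - b = (a - b) + 1 := by ring
          rw [this, val1_add_one hz, hval1c]
          simp [hb]
        · have hgb : b + ((d b : ℕ) : ZMod n) ≠ a := by
            intro h
            exact hbc (hg (h.trans hc.symm))
          rw [step_iff d hd hb hgb]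
          simp [hb, hbc]
    have hcB : c ∈ Bset d a := by
      simp only [Bset, Finset.mem_filter, Finset.mem_univ, true_and, hval1c, le_refl]
    have haB : a ∉ (Bset d a).erase c := by
      simp only [Finset.mem_erase, Bset, Finset.mem_filter, Finset.mem_univ, true_and,
        sub_self, val1_zero]
      intro h
      omega
    rw [hsets, Finset.card_insert_of_notMem haB, Finset.card_erase_of_mem hcB]
    have := Finset.card_pos.2 ⟨c, hcB⟩
    omega
  

lemma count_constant (d : ZMod n → ℕ) (hd : ∀ b, d b ≤ n)
    (hg : Function.Injective (fun b : ZMod n => b + ((d b : ℕ) : ZMod n))) (a a' : ZMod n) :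
    (Bset d a).card = (Bset d a').card := by
  have key : ∀ (m : ℕ) (x : ZMod n), (Bset d (x + (m : ZMod n))).card = (Bset d x).card := by
    intro m
    induction m with
    | zero => intro x; simp
    | succ m ih =>
      intro x
      have : x + ((m + 1 : ℕ) : ZMod n) = (x + (m : ℕ)) + 1 := by push_cast; ring
      rw [this, count_step d hd hg, ih]
  have := key ((a' - a).val) a
  rw [ZMod.natCast_zmod_val, add_sub_cancel] at this
  exact this.symm

lemma count_total (d : ZMod n → ℕ) (hd : ∀ b, d b ≤ n)
    (hg : Function.Injective (fun b : ZMod n => b + ((d b : ℕ) : ZMod n))) (a : ZMod n) :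
    (Bset d a).card * n = ∑ b : ZMod n, d b := by
  have h1 : ∑ a' : ZMod n, (Bset d a').card = (Bset d a).card * n := by
    rw [Finset.sum_congr rfl (fun a' _ => count_constant d hd hg a' a)]
    simp [Finset.sum_const, ZMod.card, mul_comm]
  rw [← h1]
  have h2 : ∀ a' : ZMod n, (Bset d a').card
      = ∑ b : ZMod n, if val1 n (a' - b) ≤ d b then 1 else 0 := by
    intro a'; rw [Bset, Finset.card_filter]
  rw [Finset.sum_congr rfl (fun a' _ => h2 a'), Finset.sum_comm]
  refine Finset.sum_congr rfl (fun b _ => ?_)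
  rw [← Finset.card_filter]
  exact count_aux d hd b

section Perm
variable {n : ℕ} [NeZero n]

lemma shift_lemma {f : ℤ → ℤ} (hper : ∀ i : ℤ, f (i + n) = f i + n) (i m : ℤ) :
    f (i + n * m) = f i + n * m := by
  induction m using Int.induction_on with
  | zero => simp
  | succ m ih =>
    have h1 : i + (n : ℤ) * ((m : ℤ) + 1) = (i + n * m) + n := by ring
    rw [h1, hper, ih]; ring
  | pred m ih =>
    have h1 : i + (n : ℤ) * (-(m : ℤ) - 1) + n = i + n * (-(m : ℤ)) := by ring
    have := hper (i + n * (-(m : ℤ) - 1))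
    rw [h1, ih] at this
    omega

lemma f_apply {f : ℤ → ℤ} (hper : ∀ i : ℤ, f (i + n) = f i + n) (i : ℤ) :
    f i = i + (f (((i : ZMod n).val : ℤ)) - (((i : ZMod n).val : ℤ))) := by
  set v : ℤ := (((i : ZMod n).val : ℕ) : ℤ) with hv
  have hcast : ((v : ℤ) : ZMod n) = (i : ZMod n) := by
    rw [hv]; push_cast; exact ZMod.natCast_zmod_val _
  have hdvd : (n : ℤ) ∣ i - v := by
    rw [← ZMod.intCast_zmod_eq_zero_iff_dvd]
    push_cast
    rw [hcast]; ring
  obtain ⟨m, hm⟩ := hdvd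
  have : i = v + n * m := by omega
  rw [this, shift_lemma hper]
  ring

/-- Residue-level displacement of an affine permutation. -/
def dprm (n : ℕ) (f : ℤ → ℤ) (b : ZMod n) : ℕ := (f ((b.val : ℕ) : ℤ) - ((b.val : ℕ) : ℤ)).toNat

/-- Residue-level map induced by an affine permutation. -/
def gprm (n : ℕ) (f : ℤ → ℤ) (b : ZMod n) : ZMod n := ((f ((b.val : ℕ) : ℤ) : ℤ) : ZMod n)

lemma dprm_cast {f : ℤ → ℤ} (hbd : ∀ i : ℤ, i ≤ f i ∧ f i ≤ i + n) (b : ZMod n) :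
    ((dprm n f b : ℕ) : ℤ) = f ((b.val : ℕ) : ℤ) - ((b.val : ℕ) : ℤ) := by
  have := (hbd ((b.val : ℕ) : ℤ)).1
  rw [dprm, Int.toNat_of_nonneg]; omega

lemma dprm_le {f : ℤ → ℤ} (hbd : ∀ i : ℤ, i ≤ f i ∧ f i ≤ i + n) (b : ZMod n) :
    dprm n f b ≤ n := by
  have h1 := (hbd ((b.val : ℕ) : ℤ)).1
  have h2 := (hbd ((b.val : ℕ) : ℤ)).2
  rw [dprm]; omega

lemma f_apply_dprm {f : ℤ → ℤ} (hper : ∀ i : ℤ, f (i + n) = f i + n)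
    (hbd : ∀ i : ℤ, i ≤ f i ∧ f i ≤ i + n) (i : ℤ) :
    f i = i + ((dprm n f (i : ZMod n) : ℕ) : ℤ) := by
  rw [dprm_cast hbd]
  exact f_apply hper i

lemma gprm_eq {f : ℤ → ℤ} (hbd : ∀ i : ℤ, i ≤ f i ∧ f i ≤ i + n) (b : ZMod n) :
    gprm n f b = b + ((dprm n f b : ℕ) : ZMod n) := by
  rw [gprm]
  have : f ((b.val : ℕ) : ℤ) = ((b.val : ℕ) : ℤ) + ((dprm n f b : ℕ) : ℤ) := by
    rw [dprm_cast hbd]; ring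
  rw [this]
  push_cast
  rw [ZMod.natCast_zmod_val]

lemma gprm_injective {f : ℤ → ℤ} (hf : Function.Injective f)
    (hper : ∀ i : ℤ, f (i + n) = f i + n) : Function.Injective (gprm n f) := by
  intro a b h
  rw [gprm, gprm] at h
  have hdvd : (n : ℤ) ∣ f ((a.val : ℕ) : ℤ) - f ((b.val : ℕ) : ℤ) := by
    rw [← ZMod.intCast_zmod_eq_zero_iff_dvd]
    push_cast
    rw [h]; ring
  obtain ⟨m, hm⟩ := hdvd
  have h2 : f ((a.val : ℕ) : ℤ) = f (((b.val : ℕ) : ℤ) + n * m) := by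
    rw [shift_lemma hper]; omega
  have h3 : ((a.val : ℕ) : ℤ) = ((b.val : ℕ) : ℤ) + n * m := hf h2
  have h4 : ((((a.val : ℕ) : ℤ)) : ZMod n) = ((((b.val : ℕ) : ℤ) + n * m : ℤ) : ZMod n) := by
    rw [h3]
  push_cast at h4
  simpa [ZMod.natCast_self] using h4

end Perm

section Char
variable {n : ℕ} [NeZero n]

lemma val1_intCast {t : ℤ} (h1 : 1 ≤ t) (h2 : t ≤ n) :
    ((val1 n ((t : ℤ) : ZMod n) : ℕ) : ℤ) = t := by
  have ht : t = ((t.toNat : ℕ) : ℤ) := by omega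
  rw [ht]
  push_cast
  rw [val1_natCast (by omega) (by omega)]

lemma mem_necklace_iff {f : ℤ → ℤ} (hper : ∀ i : ℤ, f (i + n) = f i + n)
    (hbd : ∀ i : ℤ, i ≤ f i ∧ f i ≤ i + n) (a x : ZMod n) :
    x ∈ necklaceOfPerm n f a ↔ ∃ b : ZMod n, gprm n f b = x ∧ val1 n (a - b) ≤ dprm n f b := by
  simp only [necklaceOfPerm, Finset.mem_image, Finset.mem_filter, Finset.mem_Ico]
  constructor
  · rintro ⟨i, ⟨⟨h1, h2⟩, h3⟩, h4⟩
    refine ⟨(i : ZMod n), ?_, ?_⟩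
    · rw [← h4, gprm_eq hbd]
      rw [f_apply_dprm hper hbd i]
      push_cast
      ring
    · have hfi := f_apply_dprm hper hbd i
      have hab : a - (i : ZMod n) = (((a.val : ℤ) - i : ℤ) : ZMod n) := by
        push_cast
        rw [ZMod.natCast_zmod_val]
      have h5 : (1 : ℤ) ≤ (a.val : ℤ) - i := by omega
      have h6 : (a.val : ℤ) - i ≤ n := by omega
      have h7 := val1_intCast (n := n) h5 h6
      rw [hab]
      omega
  · rintro ⟨b, hgb, hv⟩
    set t : ℤ := ((val1 n (a - b) : ℕ) : ℤ) with hts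
    have ht1 : 1 ≤ t := by have := val1_pos (a - b); omega
    have ht2 : t ≤ n := by have := val1_le (a - b); omega
    set i : ℤ := (a.val : ℤ) - t with his
    have hib : (i : ZMod n) = b := by
      rw [his, hts]
      push_cast
      rw [ZMod.natCast_zmod_val, natCast_val1]
      ring
    have hfi : f i = i + ((dprm n f b : ℕ) : ℤ) := by
      rw [f_apply_dprm hper hbd i, hib]
    refine ⟨i, ⟨⟨by omega, by omega⟩, ?_⟩, ?_⟩
    · rw [hfi]; omega
    · rw [hfi]
      push_cast
      rw [hib, ← gprm_eq hbd, hgb]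

end Char

section Forward
variable {n k : ℕ} [NeZero n] {f : ℤ → ℤ}

lemma hg_of_perm (hf : Function.Injective f) (hper : ∀ i : ℤ, f (i + n) = f i + n)
    (hbd : ∀ i : ℤ, i ≤ f i ∧ f i ≤ i + n) :
    Function.Injective (fun b : ZMod n => b + ((dprm n f b : ℕ) : ZMod n)) := by
  have : (fun b : ZMod n => b + ((dprm n f b : ℕ) : ZMod n)) = gprm n f :=
    funext fun b => (gprm_eq hbd b).symm
  rw [this]; exact gprm_injective hf hper

lemma necklace_eq_image (hper : ∀ i : ℤ, f (i + n) = f i + n)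
    (hbd : ∀ i : ℤ, i ≤ f i ∧ f i ≤ i + n) (a : ZMod n) :
    necklaceOfPerm n f a = (Bset (dprm n f) a).image (gprm n f) := by
  ext x
  rw [mem_necklace_iff hper hbd, Finset.mem_image]
  simp only [Bset, Finset.mem_filter, Finset.mem_univ, true_and]
  constructor
  · rintro ⟨b, h1, h2⟩; exact ⟨b, h2, h1⟩
  · rintro ⟨b, h1, h2⟩; exact ⟨b, h2, h1⟩

lemma sum_zmod_eq (F : ZMod n → ℤ) :
    ∑ i ∈ Finset.Icc (1 : ℤ) (n : ℤ), F ((i : ZMod n)) = ∑ b : ZMod n, F b := by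
  apply Finset.sum_nbij' (fun i : ℤ => ((i : ZMod n))) (fun b : ZMod n => ((val1 n b : ℕ) : ℤ))
  · intro i _; exact Finset.mem_univ _
  · intro b _
    rw [Finset.mem_Icc]
    have := val1_pos b; have := val1_le b
    omega
  · intro i hi
    rw [Finset.mem_Icc] at hi
    exact val1_intCast hi.1 hi.2
  · intro b _
    push_cast
    exact natCast_val1 b
  · intro i _; rfl

lemma sum_dprm (hper : ∀ i : ℤ, f (i + n) = f i + n)
    (hbd : ∀ i : ℤ, i ≤ f i ∧ f i ≤ i + n)
    (hsum : (∑ i ∈ Finset.Icc (1 : ℤ) (n : ℤ), (f i - i)) = (k : ℤ) * n) :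
    ∑ b : ZMod n, dprm n f b = k * n := by
  have h1 : ∀ i ∈ Finset.Icc (1 : ℤ) (n : ℤ), f i - i = ((dprm n f (i : ZMod n) : ℕ) : ℤ) := by
    intro i _
    have := f_apply_dprm hper hbd i
    omega
  rw [Finset.sum_congr rfl h1, sum_zmod_eq (fun b => ((dprm n f b : ℕ) : ℤ))] at hsum
  have : ((∑ b : ZMod n, dprm n f b : ℕ) : ℤ) = ((k * n : ℕ) : ℤ) := by
    push_cast
    rw [hsum]
  exact_mod_cast this

lemma card_necklace (hf : Function.Injective f) (hper : ∀ i : ℤ, f (i + n) = f i + n)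
    (hbd : ∀ i : ℤ, i ≤ f i ∧ f i ≤ i + n)
    (hsum : (∑ i ∈ Finset.Icc (1 : ℤ) (n : ℤ), (f i - i)) = (k : ℤ) * n) (a : ZMod n) :
    (necklaceOfPerm n f a).card = k := by
  rw [necklace_eq_image hper hbd,
    Finset.card_image_of_injective _ (gprm_injective hf hper)]
  have h1 := count_total (dprm n f) (dprm_le hbd) (hg_of_perm hf hper hbd) a
  rw [sum_dprm hper hbd hsum] at h1
  have hn := Nat.pos_of_ne_zero (NeZero.ne n)
  exact Nat.eq_of_mul_eq_mul_right hn h1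

lemma necklace_subset (hf : Function.Injective f) (hper : ∀ i : ℤ, f (i + n) = f i + n)
    (hbd : ∀ i : ℤ, i ≤ f i ∧ f i ≤ i + n) (a : ZMod n) :
    necklaceOfPerm n f a ⊆ insert a (necklaceOfPerm n f (a + 1)) := by
  intro x hx
  by_cases hxa : x = a
  · subst hxa; exact Finset.mem_insert_self _ _
  rw [mem_necklace_iff hper hbd] at hx
  obtain ⟨b, hgb, hv⟩ := hx
  refine Finset.mem_insert.2 (Or.inr ?_)
  rw [mem_necklace_iff hper hbd]
  refine ⟨b, hgb, ?_⟩
  have hab : a ≠ b := by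
    rintro rfl
    rw [sub_self, val1_zero] at hv
    have h1 := dprm_le hbd a
    have h2 : dprm n f a = n := le_antisymm h1 hv
    apply hxa
    rw [← hgb, gprm_eq hbd, h2, ZMod.natCast_self, add_zero]
  have hz : a - b ≠ 0 := sub_ne_zero.2 hab
  have hne : val1 n (a - b) ≠ dprm n f b := by
    intro h
    apply hxa
    rw [← hgb, gprm_eq hbd, ← h, natCast_val1]
    ring
  have h3 : a + 1 - b = (a - b) + 1 := by ring
  rw [h3, val1_add_one hz]
  omega

lemma mapsTo_necklace (hbap : IsBoundedAffinePermutation n k f) :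
    IsGrassmannNecklace n k (necklaceOfPerm n f) := by
  obtain ⟨⟨hbij, hper, hsum⟩, hbd⟩ := hbap
  exact ⟨fun a => card_necklace hbij.1 hper hbd hsum a,
    fun a => necklace_subset hbij.1 hper hbd a⟩

end Forward

section Inj
variable {n k : ℕ} [NeZero n]

lemma dprm_eq_of_necklace_eq {f f' : ℤ → ℤ}
    (hf : Function.Injective f) (hper : ∀ i : ℤ, f (i + n) = f i + n)
    (hbd : ∀ i : ℤ, i ≤ f i ∧ f i ≤ i + n)
    (hf' : Function.Injective f') (hper' : ∀ i : ℤ, f' (i + n) = f' i + n)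
    (hbd' : ∀ i : ℤ, i ≤ f' i ∧ f' i ≤ i + n)
    (heq : necklaceOfPerm n f = necklaceOfPerm n f') (b : ZMod n) :
    dprm n f b = dprm n f' b := by
  set d := dprm n f with hd
  set d' := dprm n f' with hd'
  set g := gprm n f with hgdef
  set g' := gprm n f' with hgdef'
  have hginj : Function.Injective g := gprm_injective hf hper
  have hginj' : Function.Injective g' := gprm_injective hf' hper'
  have H : ∀ (a x : ZMod n), (∃ β, g β = x ∧ val1 n (a - β) ≤ d β)
      ↔ (∃ β, g' β = x ∧ val1 n (a - β) ≤ d' β) := by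
    intro a x
    rw [← mem_necklace_iff hper hbd, ← mem_necklace_iff hper' hbd', heq]
  set x := g b with hx
  obtain ⟨b', hb'⟩ := (Finite.injective_iff_bijective.mp hginj').2 x
  have hAB : ∀ a : ZMod n, val1 n (a - b) ≤ d b ↔ val1 n (a - b') ≤ d' b' := by
    intro a
    constructor
    · intro h
      obtain ⟨β, hβ1, hβ2⟩ := (H a x).1 ⟨b, rfl, h⟩
      rwa [hginj' (hβ1.trans hb'.symm)] at hβ2
    · intro h
      obtain ⟨β, hβ1, hβ2⟩ := (H a x).2 ⟨b', hb', h⟩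
      rwa [hginj hβ1] at hβ2
  have hgb : g b = b + ((d b : ℕ) : ZMod n) := gprm_eq hbd b
  have hgb' : g' b' = b' + ((d' b' : ℕ) : ZMod n) := gprm_eq hbd' b'
  have hdble : d b ≤ n := dprm_le hbd b
  have hdble' : d' b' ≤ n := dprm_le hbd' b'
  by_cases h0 : ((d b : ℕ) : ZMod n) = 0
  · have hxb : x = b := by rw [hx, hgb, h0, add_zero]
    have hd0 : d b = 0 ∨ d b = n := (natCast_eq_zero_iff' hdble).1 h0
    rcases hd0 with hd0 | hd0
    · have hdb'0 : d' b' = 0 := by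
        by_contra hne
        have h1 : val1 n (b' + 1 - b') ≤ d' b' := by
          rw [add_sub_cancel_left, val1_one]; omega
        have h2 := (hAB (b' + 1)).2 h1
        have := val1_pos (b' + 1 - b)
        omega
      have hb'b : b' = b := by
        have : g' b' = b' := by
          rw [hgb', hdb'0]; simp
        rw [this] at hb'; rw [hb', hxb]
      subst hb'b
      omega
    · have hdb'n : d' b' = n := by
        have h1 : val1 n (b' - b) ≤ d b := by have := val1_le (b' - b); omega
        have h2 := (hAB b').1 h1
        rw [sub_self, val1_zero] at h2
        omega
      have hb'b : b' = b := by
        have : g' b' = b' := by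
          rw [hgb', hdb'n, ZMod.natCast_self, add_zero]
        rw [this] at hb'; rw [hb', hxb]
      subst hb'b
      omega
  · have hdbm : 1 ≤ d b ∧ d b ≤ n - 1 := by
      have h := (natCast_eq_zero_iff' hdble).not.1 h0
      have := NeZero.one_le (n := n)
      omega
    have h0' : ((d' b' : ℕ) : ZMod n) ≠ 0 := by
      intro hz
      rcases (natCast_eq_zero_iff' hdble').1 hz with hc | hc
      · have h1 : val1 n (b + 1 - b) ≤ d b := by
          rw [add_sub_cancel_left, val1_one]; omega
        have h2 := (hAB (b + 1)).1 h1
        have := val1_pos (b + 1 - b')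
        omega
      · have h1 : val1 n (b - b') ≤ d' b' := by have := val1_le (b - b'); omega
        have h2 := (hAB b).2 h1
        rw [sub_self, val1_zero] at h2
        omega
    have hdbm' : 1 ≤ d' b' ∧ d' b' ≤ n - 1 := by
      have h := (natCast_eq_zero_iff' hdble').not.1 h0'
      have := NeZero.one_le (n := n)
      omega
    have hbb' : b = b' := by
      by_contra hne
      have hz : b' - b ≠ 0 := sub_ne_zero.2 (fun h => hne h.symm)
      have h1 : val1 n (b' + 1 - b') ≤ d' b' := by
        rw [add_sub_cancel_left, val1_one]; omega
      have h2 := (hAB (b' + 1)).2 h1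
      have h3 : ¬ (val1 n (b' - b') ≤ d' b') := by
        rw [sub_self, val1_zero]; omega
      have h4 : ¬ (val1 n (b' - b) ≤ d b) := fun h => h3 ((hAB b').1 h)
      have h5 : b' + 1 - b = (b' - b) + 1 := by ring
      rw [h5, val1_add_one hz] at h2
      omega
    subst hbb'
    have hle1 : d b ≤ d' b := by
      have h1 : val1 n (b + ((d b : ℕ) : ZMod n) - b) ≤ d b := by
        rw [add_sub_cancel_left, val1_natCast hdbm.1 hdble]
      have h2 := (hAB (b + ((d b : ℕ) : ZMod n))).1 h1
      rwa [add_sub_cancel_left, val1_natCast hdbm.1 hdble] at h2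
    have hle2 : d' b ≤ d b := by
      have h1 : val1 n (b + ((d' b : ℕ) : ZMod n) - b) ≤ d' b := by
        rw [add_sub_cancel_left, val1_natCast hdbm'.1 hdble']
      have h2 := (hAB (b + ((d' b : ℕ) : ZMod n))).2 h1
      rwa [add_sub_cancel_left, val1_natCast hdbm'.1 hdble'] at h2
    omega

lemma eq_of_necklace_eq {f f' : ℤ → ℤ}
    (hbap : IsBoundedAffinePermutation n k f) (hbap' : IsBoundedAffinePermutation n k f')
    (heq : necklaceOfPerm n f = necklaceOfPerm n f') : f = f' := by
  obtain ⟨⟨hbij, hper, _⟩, hbd⟩ := hbap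
  obtain ⟨⟨hbij', hper', _⟩, hbd'⟩ := hbap'
  funext i
  rw [f_apply_dprm hper hbd i, f_apply_dprm hper' hbd' i,
    dprm_eq_of_necklace_eq hbij.1 hper hbd hbij'.1 hper' hbd' heq]

end Inj

section Surj
variable {n k : ℕ} [NeZero n]

/-- The new element appearing in `I (a+1)`. -/
def xOf (I : ZMod n → Finset (ZMod n)) (a : ZMod n) : ZMod n :=
  (I (a + 1) \ (I a).erase a).sum id

/-- The displacement function of a Grassmann necklace. -/
def dOf (n : ℕ) [NeZero n] (I : ZMod n → Finset (ZMod n)) (a : ZMod n) : ℕ :=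
  if a ∈ I a then val1 n (xOf I a - a) else 0

/-- The residue permutation of a Grassmann necklace. -/
def gOf (n : ℕ) [NeZero n] (I : ZMod n → Finset (ZMod n)) (a : ZMod n) : ZMod n :=
  a + ((dOf n I a : ℕ) : ZMod n)

/-- The affine permutation associated to a Grassmann necklace. -/
def fOf (n : ℕ) [NeZero n] (I : ZMod n → Finset (ZMod n)) : ℤ → ℤ :=
  fun i => i + ((dOf n I ((i : ZMod n)) : ℕ) : ℤ)

variable {I : ZMod n → Finset (ZMod n)}

lemma erase_subset_next (hsub : ∀ a, I a ⊆ insert a (I (a + 1))) (a : ZMod n) :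
    (I a).erase a ⊆ I (a + 1) := by
  intro y hy
  rw [Finset.mem_erase] at hy
  rcases Finset.mem_insert.1 (hsub a hy.2) with h | h
  · exact absurd h hy.1
  · exact h

lemma next_eq_of_not_mem (hcard : ∀ a, (I a).card = k)
    (hsub : ∀ a, I a ⊆ insert a (I (a + 1))) {a : ZMod n} (h : a ∉ I a) :
    I (a + 1) = I a := by
  have hss : I a ⊆ I (a + 1) := by
    intro y hy
    rcases Finset.mem_insert.1 (hsub a hy) with h' | h'
    · exact absurd (h' ▸ hy) h
    · exact h'
  exact (Finset.eq_of_subset_of_card_le hss (by rw [hcard, hcard])).symm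

lemma sdiff_eq_singleton (hcard : ∀ a, (I a).card = k)
    (hsub : ∀ a, I a ⊆ insert a (I (a + 1))) {a : ZMod n} (h : a ∈ I a) :
    I (a + 1) \ (I a).erase a = {xOf I a} := by
  have hsubs := erase_subset_next hsub a
  have hk1 : 1 ≤ k := by
    have := Finset.card_pos.2 ⟨a, h⟩
    rw [hcard] at this; omega
  have hcd : (I (a + 1) \ (I a).erase a).card = 1 := by
    rw [Finset.card_sdiff_of_subset hsubs, Finset.card_erase_of_mem h, hcard, hcard]
    omega
  obtain ⟨y, hy⟩ := Finset.card_eq_one.1 hcd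
  rw [hy]
  congr 1
  rw [xOf, hy, Finset.sum_singleton, id]

lemma xOf_mem (hcard : ∀ a, (I a).card = k)
    (hsub : ∀ a, I a ⊆ insert a (I (a + 1))) {a : ZMod n} (h : a ∈ I a) :
    xOf I a ∈ I (a + 1) ∧ xOf I a ∉ (I a).erase a := by
  have := sdiff_eq_singleton hcard hsub h
  have hx : xOf I a ∈ I (a + 1) \ (I a).erase a := by
    rw [this]; exact Finset.mem_singleton_self _
  rw [Finset.mem_sdiff] at hx
  exact hx

lemma next_eq_insert (hcard : ∀ a, (I a).card = k)
    (hsub : ∀ a, I a ⊆ insert a (I (a + 1))) {a : ZMod n} (h : a ∈ I a) :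
    I (a + 1) = insert (xOf I a) ((I a).erase a) := by
  have hxm := xOf_mem hcard hsub h
  have hss : insert (xOf I a) ((I a).erase a) ⊆ I (a + 1) := by
    intro y hy
    rcases Finset.mem_insert.1 hy with h' | h'
    · exact h' ▸ hxm.1
    · exact erase_subset_next hsub a h'
  refine (Finset.eq_of_subset_of_card_le hss ?_).symm
  rw [Finset.card_insert_of_notMem hxm.2, Finset.card_erase_of_mem h, hcard, hcard]
  have hk1 : 1 ≤ k := by
    have := Finset.card_pos.2 ⟨a, h⟩
    rw [hcard] at this; omega
  omega

lemma dOf_le (a : ZMod n) : dOf n I a ≤ n := by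
  rw [dOf]; split
  · exact val1_le _
  · omega

lemma dOf_pos_iff {a : ZMod n} : 1 ≤ dOf n I a ↔ a ∈ I a := by
  rw [dOf]
  constructor
  · intro h
    by_contra hc
    rw [if_neg hc] at h; omega
  · intro h
    rw [if_pos h]
    exact val1_pos _

lemma gOf_eq_xOf {a : ZMod n} (h : a ∈ I a) : gOf n I a = xOf I a := by
  rw [gOf, dOf, if_pos h, natCast_val1]
  ring

lemma gOf_eq_self {a : ZMod n} (h : a ∉ I a) : gOf n I a = a := by
  rw [gOf, dOf, if_neg h]
  simp

lemma chainF (hsub : ∀ a, I a ⊆ insert a (I (a + 1))) (m : ℕ) :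
    ∀ (c x : ZMod n), x ∈ I c → (∀ t : ℕ, t < m → c + ((t : ℕ) : ZMod n) ≠ x) →
      x ∈ I (c + ((m : ℕ) : ZMod n)) := by
  induction m with
  | zero => intro c x h _; simpa using h
  | succ m ih =>
    intro c x h hcond
    have h1 : x ∈ I (c + ((m : ℕ) : ZMod n)) := ih c x h (fun t ht => hcond t (by omega))
    have h2 : c + ((m : ℕ) : ZMod n) ≠ x := hcond m (by omega)
    rcases Finset.mem_insert.1 (hsub _ h1) with h' | h'
    · exact absurd h'.symm h2
    · have : c + (((m + 1 : ℕ)) : ZMod n) = (c + ((m : ℕ) : ZMod n)) + 1 := by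
        push_cast; ring
      rwa [this]

lemma chainB (hcard : ∀ a, (I a).card = k) (hsub : ∀ a, I a ⊆ insert a (I (a + 1))) (m : ℕ) :
    ∀ (c x : ZMod n), x ∈ I c → (∀ t : ℕ, t < m → gOf n I (c - 1 - ((t : ℕ) : ZMod n)) ≠ x) →
      x ∈ I (c - ((m : ℕ) : ZMod n)) := by
  induction m with
  | zero => intro c x h _; simpa using h
  | succ m ih =>
    intro c x h hcond
    have h1 : x ∈ I (c - ((m : ℕ) : ZMod n)) := ih c x h (fun t ht => hcond t (by omega))
    have h2 : gOf n I (c - 1 - ((m : ℕ) : ZMod n)) ≠ x := hcond m (by omega)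
    set a := c - 1 - ((m : ℕ) : ZMod n) with ha
    have hca : c - ((m : ℕ) : ZMod n) = a + 1 := by rw [ha]; ring
    have hgoal : c - (((m + 1 : ℕ)) : ZMod n) = a := by rw [ha]; push_cast; ring
    rw [hca] at h1
    rw [hgoal]
    by_cases hm : a ∈ I a
    · rw [next_eq_insert hcard hsub hm] at h1
      rcases Finset.mem_insert.1 h1 with h' | h'
      · exact absurd ((gOf_eq_xOf hm).trans h'.symm) h2
      · exact Finset.mem_of_mem_erase h'
    · rwa [next_eq_of_not_mem hcard hsub hm] at h1

lemma cast_eq_imp_val {t : ℕ} {z : ZMod n} (ht : t < n) (h : ((t : ℕ) : ZMod n) = z) :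
    t = z.val := by
  rw [← h, ZMod.val_cast_of_lt ht]

lemma mem_I_self_of_mem (hsub : ∀ a, I a ⊆ insert a (I (a + 1))) {c x : ZMod n}
    (h : x ∈ I c) : x ∈ I x := by
  have hcond : ∀ t : ℕ, t < (x - c).val → c + ((t : ℕ) : ZMod n) ≠ x := by
    intro t ht heq
    have h1 : ((t : ℕ) : ZMod n) = x - c := by linear_combination heq
    have h2 : t = (x - c).val := cast_eq_imp_val (by have := ZMod.val_lt (x - c); omega) h1
    omega
  have := chainF hsub ((x - c).val) c x h hcond
  rwa [ZMod.natCast_zmod_val, add_sub_cancel] at this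

lemma mem_all_of_mem_next (hsub : ∀ a, I a ⊆ insert a (I (a + 1))) {a : ZMod n}
    (h : a ∈ I (a + 1)) (c : ZMod n) : a ∈ I c := by
  have hcond : ∀ t : ℕ, t < (c - a - 1).val → (a + 1) + ((t : ℕ) : ZMod n) ≠ a := by
    intro t ht heq
    have h1 : (((t + 1 : ℕ)) : ZMod n) = 0 := by push_cast; linear_combination heq
    have h2 : n ∣ t + 1 := (ZMod.natCast_eq_zero_iff _ _).1 h1
    have h3 := Nat.le_of_dvd (by omega) h2
    have := ZMod.val_lt (c - a - 1)
    omega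
  have := chainF hsub ((c - a - 1).val) (a + 1) a h hcond
  rwa [ZMod.natCast_zmod_val, show a + 1 + (c - a - 1) = c by ring] at this

lemma exists_chain_hit (hsub : ∀ a, I a ⊆ insert a (I (a + 1))) {u v x : ZMod n}
    (h1 : x ∈ I (u + 1)) (h2 : x ∉ I v) :
    (x - u - 1).val < (v - u - 1).val := by
  have hstep : ∃ t : ℕ, t < (v - u - 1).val ∧ u + 1 + ((t : ℕ) : ZMod n) = x := by
    by_contra hc
    push_neg at hc
    have := chainF hsub ((v - u - 1).val) (u + 1) x h1 hc
    rw [ZMod.natCast_zmod_val, show u + 1 + (v - u - 1) = v by ring] at this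
    exact h2 this
  obtain ⟨t, ht, he⟩ := hstep
  have hv1 : ((t : ℕ) : ZMod n) = x - u - 1 := by linear_combination he
  have hv2 : t = (x - u - 1).val :=
    cast_eq_imp_val (by have := ZMod.val_lt (v - u - 1); omega) hv1
  omega

lemma mod_small (a m : ℕ) (h : a < 2 * m) : a % m = if a < m then a else a - m := by
  split
  · exact Nat.mod_eq_of_lt ‹_›
  · rename_i h2
    rw [Nat.mod_eq_sub_mod (by omega)]
    exact Nat.mod_eq_of_lt (by omega)

lemma gOf_injective (hcard : ∀ a, (I a).card = k)
    (hsub : ∀ a, I a ⊆ insert a (I (a + 1))) : Function.Injective (gOf n I) := by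
  intro u v huv
  by_contra hne
  by_cases hu : u ∈ I u <;> by_cases hv : v ∈ I v
  · -- both in: main case
    have hxu := xOf_mem hcard hsub hu
    have hxv := xOf_mem hcard hsub hv
    have hx2 : xOf I v = xOf I u := by
      rw [← gOf_eq_xOf hu, ← gOf_eq_xOf hv, huv]
    set x := xOf I u with hxdef
    rw [hx2] at hxv
    by_cases hxeu : x = u
    · have h1 : u ∈ I (u + 1) := hxeu ▸ hxu.1
      have h2 : u ∈ I v := mem_all_of_mem_next hsub h1 v
      exact hxv.2 (hxeu ▸ Finset.mem_erase.2 ⟨hne, h2⟩)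
    by_cases hxev : x = v
    · have h1 : v ∈ I (v + 1) := hxev ▸ hxv.1
      have h2 : v ∈ I u := mem_all_of_mem_next hsub h1 u
      exact hxu.2 (hxev ▸ Finset.mem_erase.2 ⟨Ne.symm hne, h2⟩)
    have hxInu : x ∉ I u := fun h => hxu.2 (Finset.mem_erase.2 ⟨hxeu, h⟩)
    have hxInv : x ∉ I v := fun h => hxv.2 (Finset.mem_erase.2 ⟨hxev, h⟩)
    have hpq : (x - u - 1).val < (v - u - 1).val := exists_chain_hit hsub hxu.1 hxInv
    have hpq' : (x - v - 1).val < (u - v - 1).val := exists_chain_hit hsub hxv.1 hxInu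
    set p := (x - u - 1).val
    set q := (v - u - 1).val
    set p' := (x - v - 1).val
    set q' := (u - v - 1).val
    have e1 : ((p' : ℕ) : ZMod n) = x - v - 1 := ZMod.natCast_zmod_val _
    have e2 : ((q : ℕ) : ZMod n) = v - u - 1 := ZMod.natCast_zmod_val _
    have e3 : ((p : ℕ) : ZMod n) = x - u - 1 := ZMod.natCast_zmod_val _
    have e4 : ((q' : ℕ) : ZMod n) = u - v - 1 := ZMod.natCast_zmod_val _
    have hc1 : ((p' + q + 1 : ℕ) : ZMod n) = ((p + n : ℕ) : ZMod n) := by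
      push_cast
      rw [e1, e2, e3, ZMod.natCast_self]
      ring
    have hc2 : ((q' + q + 2 : ℕ) : ZMod n) = ((0 : ℕ) : ZMod n) := by
      push_cast
      rw [e4, e2]
      ring
    rw [ZMod.natCast_eq_natCast_iff'] at hc1 hc2
    have hqn : q ≠ n - 1 := by
      intro hq
      apply hne
      have hn1 : ((n - 1 + 1 : ℕ) : ZMod n) = 0 := by
        have : n - 1 + 1 = n := by have := NeZero.one_le (n := n); omega
        rw [this, ZMod.natCast_self]
      have : v - u - 1 = -1 := by
        rw [← e2, hq]
        push_cast at hn1 ⊢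
        linear_combination hn1
      have h5 : v - u = 0 := by linear_combination this
      exact (sub_eq_zero.1 h5).symm
    have hb1 : p < n := ZMod.val_lt _
    have hb2 : q < n := ZMod.val_lt _
    have hb3 : p' < n := ZMod.val_lt _
    have hb4 : q' < n := ZMod.val_lt _
    clear_value p q p' q'
    have hn1 := NeZero.one_le (n := n)
    rw [mod_small _ n (by omega), mod_small _ n (by omega)] at hc1
    rw [mod_small _ n (by omega), Nat.zero_mod] at hc2
    split_ifs at hc1 hc2 <;> omega
  · -- u ∈ I u, v ∉ I v
    have h1 : xOf I u = v := by rw [← gOf_eq_xOf hu, huv, gOf_eq_self hv]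
    have h2 : v ∈ I (u + 1) := h1 ▸ (xOf_mem hcard hsub hu).1
    exact hv (mem_I_self_of_mem hsub h2)
  · -- u ∉ I u, v ∈ I v
    have h1 : xOf I v = u := by rw [← gOf_eq_xOf hv, ← huv, gOf_eq_self hu]
    have h2 : u ∈ I (v + 1) := h1 ▸ (xOf_mem hcard hsub hv).1
    exact hu (mem_I_self_of_mem hsub h2)
  · exact hne (by rw [← gOf_eq_self hu, huv, gOf_eq_self hv])

lemma val_sub_one {z : ZMod n} (hz : z ≠ 0) : (z - 1).val = z.val - 1 := by
  have h1 : 1 ≤ z.val := by have := ZMod.val_pos.2 hz; omega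
  have h2 : z.val - 1 < n := by have := ZMod.val_lt z; omega
  refine (cast_eq_imp_val h2 ?_).symm
  push_cast [Nat.cast_sub h1]
  rw [ZMod.natCast_zmod_val]

lemma gOf_mem_of_le (hcard : ∀ a, (I a).card = k)
    (hsub : ∀ a, I a ⊆ insert a (I (a + 1))) {a b : ZMod n}
    (h : val1 n (a - b) ≤ dOf n I b) : gOf n I b ∈ I a := by
  have hd1 : 1 ≤ dOf n I b := le_trans (val1_pos _) h
  have hb : b ∈ I b := dOf_pos_iff.1 hd1
  have hdval : dOf n I b = val1 n (xOf I b - b) := by rw [dOf, if_pos hb]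
  have hx1 := (xOf_mem hcard hsub hb).1
  rw [gOf_eq_xOf hb]
  by_cases hxb : xOf I b = b
  · rw [hxb] at hx1 ⊢
    exact mem_all_of_mem_next hsub hx1 a
  · have hX0 : (xOf I b - b) ≠ 0 := sub_ne_zero.2 hxb
    have hdX : dOf n I b = (xOf I b - b).val := by
      rw [hdval, val1, if_neg hX0]
    have hXb : 1 ≤ (xOf I b - b).val := ZMod.val_pos.2 hX0
    have hab : a ≠ b := by
      rintro rfl
      rw [sub_self, val1_zero] at h
      have h2 := ZMod.val_lt (xOf I a - a)
      omega
    have hA0 : (a - b) ≠ 0 := sub_ne_zero.2 hab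
    have hAval : val1 n (a - b) = (a - b).val := by rw [val1, if_neg hA0]
    have hcond : ∀ t : ℕ, t < (a - b - 1).val → (b + 1) + ((t : ℕ) : ZMod n) ≠ xOf I b := by
      intro t ht heq
      have h1 : ((t : ℕ) : ZMod n) = xOf I b - b - 1 := by linear_combination heq
      have h2 : t = (xOf I b - b - 1).val :=
        cast_eq_imp_val (by have := ZMod.val_lt (a - b - 1); omega) h1
      rw [val_sub_one hX0] at h2
      rw [val_sub_one hA0] at ht
      omega
    have := chainF hsub ((a - b - 1).val) (b + 1) (xOf I b) hx1 hcond
    rwa [ZMod.natCast_zmod_val, show b + 1 + (a - b - 1) = a by ring] at this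

lemma exists_gOf_of_mem (hcard : ∀ a, (I a).card = k)
    (hsub : ∀ a, I a ⊆ insert a (I (a + 1))) {a x : ZMod n} (hx : x ∈ I a) :
    ∃ b, gOf n I b = x ∧ val1 n (a - b) ≤ dOf n I b := by
  have hginj := gOf_injective hcard hsub
  obtain ⟨b, hb⟩ := (Finite.injective_iff_bijective.mp hginj).2 x
  refine ⟨b, hb, ?_⟩
  have hBchain : ∀ m : ℕ, (∀ t : ℕ, t < m → a - 1 - ((t : ℕ) : ZMod n) ≠ b) →
      x ∈ I (a - ((m : ℕ) : ZMod n)) := by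
    intro m hcond
    exact chainB hcard hsub m a x hx
      (fun t ht heq => hcond t ht (hginj (heq.trans hb.symm)))
  by_cases hd0 : dOf n I b = 0
  · exfalso
    have hbnot : b ∉ I b := fun h => by have := dOf_pos_iff.2 h; omega
    have hxb : x = b := by rw [← hb, gOf_eq_self hbnot]
    have hchain := hBchain ((a - b - 1).val) ?_
    · rw [ZMod.natCast_zmod_val, show a - (a - b - 1) = b + 1 by ring,
        next_eq_of_not_mem hcard hsub hbnot] at hchain
      exact hbnot (hxb ▸ hchain)
    · intro t ht heq
      have h1 : ((t : ℕ) : ZMod n) = a - b - 1 := by linear_combination -heq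
      have h2 : t = (a - b - 1).val :=
        cast_eq_imp_val (by have := ZMod.val_lt (a - b - 1); omega) h1
      omega
  · have hbmem : b ∈ I b := dOf_pos_iff.1 (by omega)
    have hxx : x = xOf I b := by rw [← hb, gOf_eq_xOf hbmem]
    have hdval : dOf n I b = val1 n (xOf I b - b) := by rw [dOf, if_pos hbmem]
    by_cases hdn : dOf n I b = n
    · rw [hdn]; exact val1_le _
    have hxb : x ≠ b := by
      intro h
      rw [hdval, ← hxx, h, sub_self, val1_zero] at hdn
      exact hdn rfl
    have hX0 : (x - b) ≠ 0 := sub_ne_zero.2 hxb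
    have hdX : dOf n I b = (x - b).val := by
      rw [hdval, ← hxx, val1, if_neg hX0]
    have hxI : x ∉ I b := by
      intro h
      exact (xOf_mem hcard hsub hbmem).2 (hxx ▸ Finset.mem_erase.2 ⟨hxb, h⟩)
    have hab : a ≠ b := by rintro rfl; exact hxI hx
    have hA0 : (a - b) ≠ 0 := sub_ne_zero.2 hab
    rw [val1, if_neg hA0]
    set A := (a - b).val with hA
    set X := (x - b).val with hXd
    have hXb : 1 ≤ X := ZMod.val_pos.2 hX0
    have hAb : 1 ≤ A := ZMod.val_pos.2 hA0
    have hAn : A < n := ZMod.val_lt _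
    have hXn : X < n := ZMod.val_lt _
    rw [hdX]
    by_contra hgt
    push_neg at hgt
    -- hgt : X < A
    have hax : ((A - X : ℕ) : ZMod n) = a - x := by
      push_cast [Nat.cast_sub hgt.le]
      rw [hA, hXd, ZMod.natCast_zmod_val, ZMod.natCast_zmod_val]
      ring
    have hax1 : ((A - X - 1 : ℕ) : ZMod n) = a - x - 1 := by
      push_cast [Nat.cast_sub hgt.le, Nat.cast_sub (show 1 ≤ A - X by omega)]
      rw [hA, hXd, ZMod.natCast_zmod_val, ZMod.natCast_zmod_val]
      ring
    have hcond : ∀ m : ℕ, m ≤ A - X → ∀ t : ℕ, t < m → a - 1 - ((t : ℕ) : ZMod n) ≠ b := by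
      intro m hm t ht heq
      have h1 : ((t : ℕ) : ZMod n) = a - b - 1 := by linear_combination -heq
      have h2 : t = (a - b - 1).val := cast_eq_imp_val (by omega) h1
      rw [val_sub_one hA0, ← hA] at h2
      omega
    have hmem1 : x ∈ I x := by
      have := hBchain (A - X) (hcond (A - X) le_rfl)
      rwa [hax, show a - (a - x) = x by ring] at this
    have hmem2 : x ∈ I (x + 1) := by
      have := hBchain (A - X - 1) (hcond (A - X - 1) (by omega))
      rwa [hax1, show a - (a - x - 1) = x + 1 by ring] at this
    have hxofx : x = xOf I x := by
      have hsd := sdiff_eq_singleton hcard hsub hmem1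
      have : x ∈ I (x + 1) \ (I x).erase x :=
        Finset.mem_sdiff.2 ⟨hmem2, Finset.notMem_erase _ _⟩
      rw [hsd, Finset.mem_singleton] at this
      exact this
    have : gOf n I x = gOf n I b := by
      rw [gOf_eq_xOf hmem1, ← hxofx, hb]
    exact hxb (hginj this)

lemma dprm_fOf (b : ZMod n) : dprm n (fOf n I) b = dOf n I b := by
  rw [dprm, fOf]
  have h1 : ((((b.val : ℕ) : ℤ) : ZMod n)) = b := by
    push_cast
    exact ZMod.natCast_zmod_val b
  rw [h1]
  omega

lemma fOf_per : ∀ i : ℤ, fOf n I (i + n) = fOf n I i + n := by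
  intro i
  rw [fOf, fOf]
  have h1 : ((i + (n : ℤ) : ℤ) : ZMod n) = (i : ZMod n) := by
    push_cast
    simp
  rw [h1]
  ring

lemma fOf_bdd : ∀ i : ℤ, i ≤ fOf n I i ∧ fOf n I i ≤ i + n := by
  intro i
  have h2 : ((dOf n I ((i : ZMod n)) : ℕ) : ℤ) ≤ (n : ℤ) := by exact_mod_cast dOf_le _
  rw [fOf]
  omega

lemma gprm_fOf (b : ZMod n) : gprm n (fOf n I) b = gOf n I b := by
  rw [gprm_eq fOf_bdd, dprm_fOf, gOf]

lemma fOf_injective (hcard : ∀ a, (I a).card = k)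
    (hsub : ∀ a, I a ⊆ insert a (I (a + 1))) : Function.Injective (fOf n I) := by
  have hginj := gOf_injective hcard hsub
  intro i j hij
  have h1 : gOf n I (i : ZMod n) = gOf n I (j : ZMod n) := by
    have h0 : ((fOf n I i : ℤ) : ZMod n) = ((fOf n I j : ℤ) : ZMod n) := by rw [hij]
    rw [fOf, fOf] at h0
    push_cast at h0
    exact h0
  have h2 : (i : ZMod n) = (j : ZMod n) := hginj h1
  rw [fOf, fOf, h2] at hij
  omega

lemma fOf_surjective (hcard : ∀ a, (I a).card = k)
    (hsub : ∀ a, I a ⊆ insert a (I (a + 1))) : Function.Surjective (fOf n I) := by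
  have hginj := gOf_injective hcard hsub
  intro c
  obtain ⟨β, hβ⟩ := (Finite.injective_iff_bijective.mp hginj).2 ((c : ZMod n))
  refine ⟨c - ((dOf n I β : ℕ) : ℤ), ?_⟩
  have hres : ((c - ((dOf n I β : ℕ) : ℤ) : ℤ) : ZMod n) = β := by
    push_cast
    rw [← hβ, gOf]
    ring
  rw [fOf, hres]
  ring

lemma sum_dOf (hcard : ∀ a, (I a).card = k)
    (hsub : ∀ a, I a ⊆ insert a (I (a + 1))) : ∑ b : ZMod n, dOf n I b = k * n := by
  have hginj' : Function.Injective (fun b : ZMod n => b + ((dOf n I b : ℕ) : ZMod n)) :=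
    gOf_injective hcard hsub
  have h0 := count_total (dOf n I) (fun b => dOf_le b) hginj' 0
  have hIa : I 0 = (Bset (dOf n I) 0).image (gOf n I) := by
    ext x
    rw [Finset.mem_image]
    simp only [Bset, Finset.mem_filter, Finset.mem_univ, true_and]
    constructor
    · intro hx
      obtain ⟨b, h1, h2⟩ := exists_gOf_of_mem hcard hsub hx
      exact ⟨b, h2, h1⟩
    · rintro ⟨b, h1, h2⟩
      rw [← h2]
      exact gOf_mem_of_le hcard hsub h1
  have hcardB : (Bset (dOf n I) 0).card = k := by
    have := Finset.card_image_of_injective (Bset (dOf n I) 0) (gOf_injective hcard hsub)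
    rw [← hIa] at this
    rw [← this, hcard 0]
  rw [hcardB] at h0
  omega

lemma necklace_fOf (hcard : ∀ a, (I a).card = k)
    (hsub : ∀ a, I a ⊆ insert a (I (a + 1))) : necklaceOfPerm n (fOf n I) = I := by
  funext a
  ext x
  rw [mem_necklace_iff fOf_per fOf_bdd]
  constructor
  · rintro ⟨b, h1, h2⟩
    rw [gprm_fOf] at h1
    rw [dprm_fOf] at h2
    rw [← h1]
    exact gOf_mem_of_le hcard hsub h2
  · intro hx
    obtain ⟨b, h1, h2⟩ := exists_gOf_of_mem hcard hsub hx
    exact ⟨b, by rw [gprm_fOf]; exact h1, by rw [dprm_fOf]; exact h2⟩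

lemma fOf_sum (hcard : ∀ a, (I a).card = k)
    (hsub : ∀ a, I a ⊆ insert a (I (a + 1))) :
    (∑ i ∈ Finset.Icc (1 : ℤ) (n : ℤ), (fOf n I i - i)) = (k : ℤ) * n := by
  have h1 : ∀ i ∈ Finset.Icc (1 : ℤ) (n : ℤ),
      fOf n I i - i = ((dOf n I ((i : ZMod n)) : ℕ) : ℤ) := by
    intro i _
    rw [fOf]
    ring
  rw [Finset.sum_congr rfl h1, sum_zmod_eq (fun b => ((dOf n I b : ℕ) : ℤ)),
    ← Nat.cast_sum, sum_dOf hcard hsub]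
  push_cast
  ring

end Surj

/-- The map `f ↦ (I_a)` with `I_a = {f b mod n : b < a, f b ≥ a}` is a bijection from the
set of `(k,n)` bounded affine permutations onto the set of `(k,n)` Grassmann necklaces. -/
theorem boundedAffinePermutation_to_grassmannNecklace_bijOn (n k : ℕ) (hn : 0 < n) :
    Set.BijOn (necklaceOfPerm n)
      {f : ℤ → ℤ | IsBoundedAffinePermutation n k f}
      {I : ZMod n → Finset (ZMod n) | IsGrassmannNecklace n k I} := by
  haveI : NeZero n := ⟨hn.ne'⟩
  refine ⟨fun f hf => mapsTo_necklace hf, ⟨fun f hf f' hf' heq => eq_of_necklace_eq hf hf' heq, ?_⟩⟩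
  intro I hI
  obtain ⟨hcard, hsub⟩ := hI
  exact ⟨fOf n I,
    ⟨⟨⟨fOf_injective hcard hsub, fOf_surjective hcard hsub⟩, fOf_per, fOf_sum hcard hsub⟩,
      fOf_bdd⟩,
    necklace_fOf hcard hsub⟩
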